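/- Let μ > 0, r > 0, and let g : ℝ → ℂ be integrable with support contained in [−r, r]. Then for all ζ₁, ζ₂ ∈ ℂ: |sinh((ζ₁ − ζ₂)/2)| · |∫_ℝ g(x) · e^{iμ(cosh ζ₁ + cosh ζ₂)x} dx| ≤ 2‖g‖₁ · cosh(Re ζ₁) · cosh(Re ζ₂) · exp( μ r (|Im sinh ζ₁| + |Im sinh ζ₂|) ). -/

import Mathlib

open MeasureTheory

lemma aux_sinh_decomp (z : ℂ) :
    Complex.sinh z = ((Real.sinh z.re * Real.cos z.im : ℝ) : ℂ) +
      ((Real.cosh z.re * Real.sin z.im : ℝ) : ℂ) * Complex.I := by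
  conv_lhs => rw [← Complex.re_add_im z]
  rw [Complex.sinh_add, Complex.sinh_mul_I, Complex.cosh_mul_I,
    ← Complex.ofReal_sinh, ← Complex.ofReal_cosh, ← Complex.ofReal_sin, ← Complex.ofReal_cos]
  push_cast
  ring

lemma aux_cosh_decomp (z : ℂ) :
    Complex.cosh z = ((Real.cosh z.re * Real.cos z.im : ℝ) : ℂ) +
      ((Real.sinh z.re * Real.sin z.im : ℝ) : ℂ) * Complex.I := by
  conv_lhs => rw [← Complex.re_add_im z]
  rw [Complex.cosh_add, Complex.sinh_mul_I, Complex.cosh_mul_I,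
    ← Complex.ofReal_sinh, ← Complex.ofReal_cosh, ← Complex.ofReal_sin, ← Complex.ofReal_cos]
  push_cast
  ring

lemma aux_sinh_re (z : ℂ) : (Complex.sinh z).re = Real.sinh z.re * Real.cos z.im := by
  rw [aux_sinh_decomp]; simp only [Complex.add_re, Complex.add_im, Complex.mul_re, Complex.mul_im, Complex.I_re, Complex.I_im, Complex.ofReal_re, Complex.ofReal_im]; ring

lemma aux_sinh_im (z : ℂ) : (Complex.sinh z).im = Real.cosh z.re * Real.sin z.im := by
  rw [aux_sinh_decomp]; simp only [Complex.add_re, Complex.add_im, Complex.mul_re, Complex.mul_im, Complex.I_re, Complex.I_im, Complex.ofReal_re, Complex.ofReal_im]; ring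

lemma aux_cosh_im (z : ℂ) : (Complex.cosh z).im = Real.sinh z.re * Real.sin z.im := by
  rw [aux_cosh_decomp]; simp only [Complex.add_re, Complex.add_im, Complex.mul_re, Complex.mul_im, Complex.I_re, Complex.I_im, Complex.ofReal_re, Complex.ofReal_im]; ring

lemma aux_abs_sinh_le (z : ℂ) : ‖Complex.sinh z‖ ≤ Real.cosh z.re := by
  rw [← Real.sqrt_sq (Real.cosh_pos z.re).le, Complex.norm_def, Complex.normSq_apply]
  apply Real.sqrt_le_sqrt
  rw [aux_sinh_re, aux_sinh_im]
  nlinarith [Real.sin_sq_add_cos_sq z.im, Real.cosh_sq z.re, sq_nonneg (Real.cos z.im),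
    sq_nonneg (Real.sin z.im)]

lemma aux_abs_sinh_le_cosh (x : ℝ) : |Real.sinh x| ≤ Real.cosh x := by
  nlinarith [Real.cosh_sq x, Real.cosh_pos x, sq_abs (Real.sinh x), abs_nonneg (Real.sinh x)]

lemma aux_cosh_sub_le (a b : ℝ) : Real.cosh (a - b) ≤ 2 * Real.cosh a * Real.cosh b := by
  rw [Real.cosh_sub]
  have h := mul_le_mul (aux_abs_sinh_le_cosh a) (aux_abs_sinh_le_cosh b) (abs_nonneg _)
    (Real.cosh_pos a).le
  nlinarith [neg_abs_le (Real.sinh a * Real.sinh b), abs_mul (Real.sinh a) (Real.sinh b)]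

lemma aux_im_cosh_le (z : ℂ) : |(Complex.cosh z).im| ≤ |(Complex.sinh z).im| := by
  rw [aux_cosh_im, aux_sinh_im, abs_mul, abs_mul]
  exact mul_le_mul_of_nonneg_right
    ((aux_abs_sinh_le_cosh z.re).trans_eq (abs_of_pos (Real.cosh_pos z.re)).symm)
    (abs_nonneg _)

theorem buchholz_summers_pointwise_bound (μ r : ℝ) (hμ : 0 < μ) (hr : 0 < r)
    (g : ℝ → ℂ) (hg : Integrable g)
    (hsupp : Function.support g ⊆ Set.Icc (-r) r)
    (ζ₁ ζ₂ : ℂ) :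
    ‖Complex.sinh ((ζ₁ - ζ₂) / 2)‖ *
      ‖∫ x : ℝ, g x *
        Complex.exp (Complex.I * (μ : ℂ) * (Complex.cosh ζ₁ + Complex.cosh ζ₂) * (x : ℂ))‖ ≤
    2 * (∫ x : ℝ, ‖g x‖) * Real.cosh ζ₁.re * Real.cosh ζ₂.re *
      Real.exp (μ * r * (|(Complex.sinh ζ₁).im| + |(Complex.sinh ζ₂).im|)) := by
  set S : ℝ := |(Complex.sinh ζ₁).im| + |(Complex.sinh ζ₂).im| with hS
  set E : ℝ := Real.exp (μ * r * S) with hE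
  -- Bound on the sinh prefactor
  have hA : ‖Complex.sinh ((ζ₁ - ζ₂) / 2)‖ ≤
      2 * Real.cosh ζ₁.re * Real.cosh ζ₂.re := by
    refine (aux_abs_sinh_le _).trans ?_
    have hre : ((ζ₁ - ζ₂) / 2).re = (ζ₁.re - ζ₂.re) / 2 := by
      simp [Complex.div_re, Complex.sub_re, Complex.sub_im, Complex.normSq_apply]
    rw [hre]
    refine le_trans ?_ (aux_cosh_sub_le ζ₁.re ζ₂.re)
    rw [← Real.cosh_abs ((ζ₁.re - ζ₂.re)/2), ← Real.cosh_abs (ζ₁.re - ζ₂.re)]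
    apply Real.cosh_le_cosh.mpr
    rw [abs_abs, abs_abs, abs_div, abs_two]
    linarith [abs_nonneg (ζ₁.re - ζ₂.re)]
  -- Pointwise bound for the integrand
  have hpt : ∀ x : ℝ, ‖g x * Complex.exp
      (Complex.I * (μ : ℂ) * (Complex.cosh ζ₁ + Complex.cosh ζ₂) * (x : ℂ))‖ ≤ E * ‖g x‖ := by
    intro x
    by_cases hx : g x = 0
    · simp [hx]
    · have hxmem : x ∈ Set.Icc (-r) r := hsupp hx
      have hxr : |x| ≤ r := abs_le.mpr ⟨hxmem.1, hxmem.2⟩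
      rw [norm_mul, Complex.norm_exp, mul_comm]
      apply mul_le_mul_of_nonneg_right _ (norm_nonneg _)
      have hre : (Complex.I * (μ : ℂ) * (Complex.cosh ζ₁ + Complex.cosh ζ₂) * (x : ℂ)).re =
          -(μ * ((Complex.cosh ζ₁).im + (Complex.cosh ζ₂).im) * x) := by
        simp [Complex.mul_re, Complex.mul_im, Complex.add_re, Complex.add_im]
      rw [hre, hE]
      apply Real.exp_le_exp.mpr
      have h1 : |(Complex.cosh ζ₁).im + (Complex.cosh ζ₂).im| ≤ S := by
        refine (abs_add_le _ _).trans ?_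
        exact add_le_add (aux_im_cosh_le ζ₁) (aux_im_cosh_le ζ₂)
      have h2 : -(μ * ((Complex.cosh ζ₁).im + (Complex.cosh ζ₂).im) * x) ≤
          μ * |(Complex.cosh ζ₁).im + (Complex.cosh ζ₂).im| * |x| := by
        calc -(μ * ((Complex.cosh ζ₁).im + (Complex.cosh ζ₂).im) * x)
            ≤ |μ * ((Complex.cosh ζ₁).im + (Complex.cosh ζ₂).im) * x| := neg_le_abs _
          _ = μ * |(Complex.cosh ζ₁).im + (Complex.cosh ζ₂).im| * |x| := by
              rw [abs_mul, abs_mul, abs_of_pos hμ]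
      refine h2.trans ?_
      have hSnn : 0 ≤ S := by positivity
      calc μ * |(Complex.cosh ζ₁).im + (Complex.cosh ζ₂).im| * |x|
          ≤ μ * S * r := by
            apply mul_le_mul (mul_le_mul_of_nonneg_left h1 hμ.le) hxr (abs_nonneg _)
            positivity
        _ = μ * r * S := by ring
  -- Bound the integral
  have hB : ‖∫ x : ℝ, g x * Complex.exp
      (Complex.I * (μ : ℂ) * (Complex.cosh ζ₁ + Complex.cosh ζ₂) * (x : ℂ))‖ ≤
      E * ∫ x : ℝ, ‖g x‖ := by
    refine (norm_integral_le_integral_norm _).trans ?_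
    rw [← integral_const_mul]
    apply integral_mono_of_nonneg
    · filter_upwards with x using norm_nonneg _
    · exact (hg.norm).const_mul E
    · filter_upwards with x using hpt x
  have hInn : 0 ≤ ∫ x : ℝ, ‖g x‖ := integral_nonneg fun x => norm_nonneg _
  calc ‖Complex.sinh ((ζ₁ - ζ₂) / 2)‖ *
      ‖∫ x : ℝ, g x * Complex.exp
        (Complex.I * (μ : ℂ) * (Complex.cosh ζ₁ + Complex.cosh ζ₂) * (x : ℂ))‖
      ≤ (2 * Real.cosh ζ₁.re * Real.cosh ζ₂.re) * (E * ∫ x : ℝ, ‖g x‖) := by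
        apply mul_le_mul hA hB (norm_nonneg _)
        positivity
    _ = 2 * (∫ x : ℝ, ‖g x‖) * Real.cosh ζ₁.re * Real.cosh ζ₂.re * E := by ring
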